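/- The function L_min(s) = Σ_{i=1}^M s_i λ_i/θ_i^u + (Σ_i (1−s_i)λ_i)/θ^u + (Σ_i √((1−s_i)λ_i + ρ s_i λ_i))²/φ, defined for s ∈ [0,1]^M, is concave on [0,1]^M. -/

import Mathlib

open Finset Real

private lemma cauchy2 (a b A B : ℝ) (ha : 0 ≤ a) (hb : 0 ≤ b) (hA : 0 ≤ A) (hB : 0 ≤ B) :
    a * A + b * B ≤ Real.sqrt (a ^ 2 + b ^ 2) * Real.sqrt (A ^ 2 + B ^ 2) := by
  rw [← Real.sqrt_mul (by positivity)]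
  rw [show a * A + b * B = Real.sqrt ((a * A + b * B) ^ 2) from
    (Real.sqrt_sq (by positivity)).symm]
  apply Real.sqrt_le_sqrt
  nlinarith [sq_nonneg (a * B - b * A)]

private lemma tri2 (a b A B : ℝ) (ha : 0 ≤ a) (hb : 0 ≤ b) (hA : 0 ≤ A) (hB : 0 ≤ B) :
    Real.sqrt ((a + A) ^ 2 + (b + B) ^ 2) ≤
      Real.sqrt (a ^ 2 + b ^ 2) + Real.sqrt (A ^ 2 + B ^ 2) := by
  have h1 := cauchy2 a b A B ha hb hA hB
  have h2 : Real.sqrt (a ^ 2 + b ^ 2) ^ 2 = a ^ 2 + b ^ 2 := Real.sq_sqrt (by positivity)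
  have h3 : Real.sqrt (A ^ 2 + B ^ 2) ^ 2 = A ^ 2 + B ^ 2 := Real.sq_sqrt (by positivity)
  rw [show Real.sqrt (a ^ 2 + b ^ 2) + Real.sqrt (A ^ 2 + B ^ 2) =
      Real.sqrt ((Real.sqrt (a ^ 2 + b ^ 2) + Real.sqrt (A ^ 2 + B ^ 2)) ^ 2) from
    (Real.sqrt_sq (by positivity)).symm]
  apply Real.sqrt_le_sqrt
  nlinarith

private lemma sqrt_superadd {ι : Type*} [DecidableEq ι] (s : Finset ι) (x y : ι → ℝ)
    (hx : ∀ i ∈ s, 0 ≤ x i) (hy : ∀ i ∈ s, 0 ≤ y i) :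
    Real.sqrt ((∑ i ∈ s, Real.sqrt (x i)) ^ 2 + (∑ i ∈ s, Real.sqrt (y i)) ^ 2) ≤
      ∑ i ∈ s, Real.sqrt (x i + y i) := by
  induction s using Finset.induction with
  | empty => simp
  | insert j s' hj ih =>
    simp only [Finset.sum_insert hj]
    have hxj : 0 ≤ x j := hx j (Finset.mem_insert_self _ _)
    have hyj : 0 ≤ y j := hy j (Finset.mem_insert_self _ _)
    have ih' := ih (fun i hi => hx i (Finset.mem_insert_of_mem hi))
      (fun i hi => hy i (Finset.mem_insert_of_mem hi))
    have hA : 0 ≤ ∑ i ∈ s', Real.sqrt (x i) := Finset.sum_nonneg fun i _ => Real.sqrt_nonneg _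
    have hB : 0 ≤ ∑ i ∈ s', Real.sqrt (y i) := Finset.sum_nonneg fun i _ => Real.sqrt_nonneg _
    calc Real.sqrt ((Real.sqrt (x j) + ∑ i ∈ s', Real.sqrt (x i)) ^ 2 +
          (Real.sqrt (y j) + ∑ i ∈ s', Real.sqrt (y i)) ^ 2)
        ≤ Real.sqrt (Real.sqrt (x j) ^ 2 + Real.sqrt (y j) ^ 2) +
          Real.sqrt ((∑ i ∈ s', Real.sqrt (x i)) ^ 2 + (∑ i ∈ s', Real.sqrt (y i)) ^ 2) :=
          tri2 _ _ _ _ (Real.sqrt_nonneg _) (Real.sqrt_nonneg _) hA hB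
      _ ≤ Real.sqrt (x j + y j) + ∑ i ∈ s', Real.sqrt (x i + y i) := by
          rw [Real.sq_sqrt hxj, Real.sq_sqrt hyj]
          exact add_le_add le_rfl ih'

private lemma sq_sum_sqrt_concave {ι : Type*} [DecidableEq ι] (s : Finset ι) (x y : ι → ℝ) (a b : ℝ)
    (ha : 0 ≤ a) (hb : 0 ≤ b)
    (hx : ∀ i ∈ s, 0 ≤ x i) (hy : ∀ i ∈ s, 0 ≤ y i) :
    a * (∑ i ∈ s, Real.sqrt (x i)) ^ 2 + b * (∑ i ∈ s, Real.sqrt (y i)) ^ 2 ≤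
      (∑ i ∈ s, Real.sqrt (a * x i + b * y i)) ^ 2 := by
  have h := sqrt_superadd s (fun i => a * x i) (fun i => b * y i)
    (fun i hi => mul_nonneg ha (hx i hi)) (fun i hi => mul_nonneg hb (hy i hi))
  have hA : (∑ i ∈ s, Real.sqrt (a * x i)) = Real.sqrt a * ∑ i ∈ s, Real.sqrt (x i) := by
    rw [Finset.mul_sum]; exact Finset.sum_congr rfl fun i hi => Real.sqrt_mul ha _
  have hB : (∑ i ∈ s, Real.sqrt (b * y i)) = Real.sqrt b * ∑ i ∈ s, Real.sqrt (y i) := by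
    rw [Finset.mul_sum]; exact Finset.sum_congr rfl fun i hi => Real.sqrt_mul hb _
  rw [hA, hB] at h
  have h2 : a * (∑ i ∈ s, Real.sqrt (x i)) ^ 2 + b * (∑ i ∈ s, Real.sqrt (y i)) ^ 2 =
      (Real.sqrt a * ∑ i ∈ s, Real.sqrt (x i)) ^ 2 +
        (Real.sqrt b * ∑ i ∈ s, Real.sqrt (y i)) ^ 2 := by
    rw [mul_pow, mul_pow, Real.sq_sqrt ha, Real.sq_sqrt hb]
  rw [h2]
  calc (Real.sqrt a * ∑ i ∈ s, Real.sqrt (x i)) ^ 2 +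
        (Real.sqrt b * ∑ i ∈ s, Real.sqrt (y i)) ^ 2
      = Real.sqrt ((Real.sqrt a * ∑ i ∈ s, Real.sqrt (x i)) ^ 2 +
          (Real.sqrt b * ∑ i ∈ s, Real.sqrt (y i)) ^ 2) ^ 2 := by
        rw [Real.sq_sqrt (by positivity)]
    _ ≤ (∑ i ∈ s, Real.sqrt (a * x i + b * y i)) ^ 2 :=
        pow_le_pow_left₀ (Real.sqrt_nonneg _) h 2

theorem Lmin_concave
    (M : ℕ) (hM : 1 ≤ M) (lam θu : Fin M → ℝ) (θ φ ρ : ℝ)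
    (hlam : ∀ i, 0 < lam i) (hθu : ∀ i, 0 < θu i)
    (hθ : 0 < θ) (hφ : 0 < φ) (hρ0 : 0 < ρ) (hρ1 : ρ < 1) :
    ConcaveOn ℝ (Set.Icc (0 : Fin M → ℝ) 1)
      (fun s =>
        (∑ i, s i * lam i / θu i) + (∑ i, (1 - s i) * lam i) / θ +
          (∑ i, Real.sqrt ((1 - s i) * lam i + ρ * s i * lam i)) ^ 2 / φ) := by
  constructor
  · exact convex_Icc _ _
  · intro p hp q hq a b ha hb hab
    simp only [smul_eq_mul, Pi.add_apply, Pi.smul_apply]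
    -- nonnegativity of the arguments
    have hpmem := hp
    have hcp : ∀ i, 0 ≤ (1 - p i) * lam i + ρ * p i * lam i := by
      intro i
      have h1 : 0 ≤ p i := (Set.mem_Icc.mp hp).1 i
      have h2 : p i ≤ 1 := (Set.mem_Icc.mp hp).2 i
      have h3 := mul_nonneg (sub_nonneg.mpr h2) (hlam i).le
      have h4 := mul_nonneg (mul_nonneg hρ0.le h1) (hlam i).le
      linarith
    have hcq : ∀ i, 0 ≤ (1 - q i) * lam i + ρ * q i * lam i := by
      intro i
      have h1 : 0 ≤ q i := (Set.mem_Icc.mp hq).1 i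
      have h2 : q i ≤ 1 := (Set.mem_Icc.mp hq).2 i
      have h3 := mul_nonneg (sub_nonneg.mpr h2) (hlam i).le
      have h4 := mul_nonneg (mul_nonneg hρ0.le h1) (hlam i).le
      linarith
    have key := sq_sum_sqrt_concave Finset.univ
      (fun i => (1 - p i) * lam i + ρ * p i * lam i)
      (fun i => (1 - q i) * lam i + ρ * q i * lam i) a b ha hb
      (fun i _ => hcp i) (fun i _ => hcq i)
    have harg : ∀ i : Fin M,
        (1 - (a * p i + b * q i)) * lam i + ρ * (a * p i + b * q i) * lam i =
          a * ((1 - p i) * lam i + ρ * p i * lam i) +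
            b * ((1 - q i) * lam i + ρ * q i * lam i) := by
      intro i; linear_combination lam i * hab.symm
    have hsum : (∑ i, Real.sqrt ((1 - (a * p i + b * q i)) * lam i +
        ρ * (a * p i + b * q i) * lam i)) =
        ∑ i, Real.sqrt (a * ((1 - p i) * lam i + ρ * p i * lam i) +
          b * ((1 - q i) * lam i + ρ * q i * lam i)) := by
      exact Finset.sum_congr rfl fun i _ => by rw [harg i]
    rw [hsum]
    have hL1 : (∑ i, (a * p i + b * q i) * lam i / θu i) =
        a * (∑ i, p i * lam i / θu i) + b * (∑ i, q i * lam i / θu i) := by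
      rw [Finset.mul_sum, Finset.mul_sum, ← Finset.sum_add_distrib]
      exact Finset.sum_congr rfl fun i _ => by ring
    have hL2 : (∑ i, (1 - (a * p i + b * q i)) * lam i) =
        a * (∑ i, (1 - p i) * lam i) + b * (∑ i, (1 - q i) * lam i) := by
      rw [Finset.mul_sum, Finset.mul_sum, ← Finset.sum_add_distrib]
      refine Finset.sum_congr rfl fun i _ => ?_
      linear_combination lam i * hab.symm
    rw [hL1, hL2]
    have hdiv : a * (∑ i, Real.sqrt ((1 - p i) * lam i + ρ * p i * lam i)) ^ 2 / φ +
        b * (∑ i, Real.sqrt ((1 - q i) * lam i + ρ * q i * lam i)) ^ 2 / φ ≤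
        (∑ i, Real.sqrt (a * ((1 - p i) * lam i + ρ * p i * lam i) +
          b * ((1 - q i) * lam i + ρ * q i * lam i))) ^ 2 / φ := by
      rw [← add_div, div_le_div_iff_of_pos_right hφ]
      exact key
    have expand : ∀ P1 P2 P3 Q1 Q2 Q3 : ℝ,
        a * (P1 + P2 / θ + P3 / φ) + b * (Q1 + Q2 / θ + Q3 / φ) =
          (a * P1 + b * Q1) + (a * P2 + b * Q2) / θ + (a * P3 / φ + b * Q3 / φ) := by
      intro P1 P2 P3 Q1 Q2 Q3; field_simp; ring
    rw [expand]
    linarith
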